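/- For any weighted graph G=(V,E,μ,w), the Cheeger k-constant bounds the k-th min-max eigenvalue of the 1-Laplacian from above: h_k(G) ≥ inf over origin-symmetric compact S⊆ℝ^V with γ(S) ≥ k of sup_{x∈S} Φ₁(x), where γ is the Krasnoselskii genus and Φ₁ is the L¹-Rayleigh quotient. Concretely: for every subpartition (A₁,…,A_k) of V, the set S = span(𝟙_{A₁},…,𝟙_{A_k}) ∩ 𝕊^{n-1} is origin-symmetric compact with γ(S) = k, and sup_{x∈S} Φ₁(x) = max_{1≤i≤k} φ(A_i). -/

import Mathlib

open Finset

variable {V : Type*}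

noncomputable def bdryW [Fintype V] [DecidableEq V] (G : SimpleGraph V) [DecidableRel G.Adj]
    (w : Sym2 V → ℝ) (A : Finset V) : ℝ :=
  ∑ u ∈ A, ∑ v ∈ Aᶜ, if G.Adj u v then w s(u, v) else 0

noncomputable def vol [Fintype V] (μ : V → ℝ) (A : Finset V) : ℝ := ∑ v ∈ A, μ v

noncomputable def phi [Fintype V] [DecidableEq V] (G : SimpleGraph V) [DecidableRel G.Adj]
    (μ : V → ℝ) (w : Sym2 V → ℝ) (A : Finset V) : ℝ := bdryW G w A / vol μ A

/-- A subpartition: a tuple of pairwise disjoint nonempty subsets of the vertex set. -/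
def IsSubpartition {k : ℕ} (A : Fin k → Finset V) : Prop :=
  (∀ i, (A i).Nonempty) ∧ ∀ i j, i ≠ j → Disjoint (A i) (A j)

/-- The Cheeger k-constant: min over subpartitions with k parts of the max expansion. -/
noncomputable def hkConst [Fintype V] [DecidableEq V] (G : SimpleGraph V) [DecidableRel G.Adj]
    (μ : V → ℝ) (w : Sym2 V → ℝ) (k : ℕ) : ℝ :=
  sInf {r | ∃ A : Fin k → Finset V, IsSubpartition A ∧
    r = sSup {s | ∃ i, s = phi G μ w (A i)}}

/-- Variant of the Cheeger k-constant where the maximum runs over all unions of parts. -/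
noncomputable def hkUnion [Fintype V] [DecidableEq V] (G : SimpleGraph V) [DecidableRel G.Adj]
    (μ : V → ℝ) (w : Sym2 V → ℝ) (k : ℕ) : ℝ :=
  sInf {r | ∃ A : Fin k → Finset V, IsSubpartition A ∧
    r = sSup {s | ∃ I : Finset (Fin k), I.Nonempty ∧ s = phi G μ w (I.biUnion A)}}

/-- The k-th max-min Cheeger constant ℓ_k. -/
noncomputable def ellk [Fintype V] [DecidableEq V] (G : SimpleGraph V) [DecidableRel G.Adj]
    (μ : V → ℝ) (w : Sym2 V → ℝ) (k : ℕ) : ℝ :=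
  sSup {r | ∃ A : Fin (Fintype.card V - k + 1) → Finset V, IsSubpartition A ∧
    r = sInf {s | ∃ I : Finset (Fin (Fintype.card V - k + 1)), I.Nonempty ∧
      s = phi G μ w (I.biUnion A)}}

/-- The Cheeger constant of a subset A: min of φ over nonempty subsets of A. -/
noncomputable def cheegerConst [Fintype V] [DecidableEq V] (G : SimpleGraph V) [DecidableRel G.Adj]
    (μ : V → ℝ) (w : Sym2 V → ℝ) (A : Finset V) : ℝ :=
  sInf {r | ∃ B : Finset V, B ⊆ A ∧ B.Nonempty ∧ r = phi G μ w B}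

/-- The k-th Dirichlet Cheeger constant ℓ̲_k. -/
noncomputable def ellUnder [Fintype V] [DecidableEq V] (G : SimpleGraph V) [DecidableRel G.Adj]
    (μ : V → ℝ) (w : Sym2 V → ℝ) (k : ℕ) : ℝ :=
  sSup {r | ∃ A : Finset V, A.card = Fintype.card V - k + 1 ∧ r = cheegerConst G μ w A}

/-- The L¹-Rayleigh quotient Φ₁. -/
noncomputable def Phi1 [Fintype V] [DecidableEq V] (G : SimpleGraph V) [DecidableRel G.Adj]
    (μ : V → ℝ) (w : Sym2 V → ℝ) (x : V → ℝ) : ℝ :=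
  ((∑ u, ∑ v, if G.Adj u v then w s(u, v) * |x u - x v| else 0) / 2) / (∑ v, μ v * |x v|)

/-- The indicator vector of a finite set of vertices. -/
def indVec [DecidableEq V] (A : Finset V) : V → ℝ := fun v => if v ∈ A then 1 else 0

/-- The Krasnoselskii genus: the least `m` such that there exists an odd continuous map
from `S` into `ℝᵐ \ {0}`. -/
noncomputable def genus [Fintype V] (S : Set (V → ℝ)) : ℕ :=
  sInf {m : ℕ | ∃ f : S → (Fin m → ℝ), Continuous f ∧ (∀ x, f x ≠ 0) ∧
    ∀ (x : V → ℝ) (hx : x ∈ S) (hx' : -x ∈ S), f ⟨-x, hx'⟩ = - f ⟨x, hx⟩}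

/-- The k-th min-max eigenvalue of the graph 1-Laplacian (with index = Krasnoselskii genus). -/
noncomputable def lambdak [Fintype V] [DecidableEq V] (G : SimpleGraph V) [DecidableRel G.Adj]
    (μ : V → ℝ) (w : Sym2 V → ℝ) (k : ℕ) : ℝ :=
  sInf {r | ∃ S : Set (V → ℝ), IsCompact S ∧ (∀ x ∈ S, -x ∈ S) ∧ k ≤ genus S ∧
    r = sSup (Phi1 G μ w '' S)}


section GenusInfra
set_option linter.unusedSectionVars false
variable [Fintype V]

/-- The defining set of the genus. -/
def gset (S : Set (V → ℝ)) : Set ℕ :=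
  {m : ℕ | ∃ f : S → (Fin m → ℝ), Continuous f ∧ (∀ x, f x ≠ 0) ∧
    ∀ (x : V → ℝ) (hx : x ∈ S) (hx' : -x ∈ S), f ⟨-x, hx'⟩ = - f ⟨x, hx⟩}

lemma genus_eq (S : Set (V → ℝ)) : genus S = sInf (gset S) := rfl

lemma genus_zero_of_zero_mem {S : Set (V → ℝ)} (h : (0 : V → ℝ) ∈ S) : genus S = 0 := by
  have he : gset S = ∅ := by
    ext m
    simp only [Set.mem_empty_iff_false, iff_false]
    rintro ⟨f, hc, hnz, hodd⟩
    have h' : -(0 : V → ℝ) ∈ S := by simpa using h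
    have := hodd 0 h h'
    have heq : (⟨-(0 : V → ℝ), h'⟩ : S) = ⟨0, h⟩ := Subtype.ext (by simp)
    rw [heq] at this
    refine hnz ⟨0, h⟩ (funext fun i => ?_)
    have := congrFun this i
    simp only [Pi.neg_apply] at this
    simp only [Pi.zero_apply]
    linarith
  rw [genus_eq, he, Nat.sInf_empty]

lemma zero_not_mem_of_genus_pos {S : Set (V → ℝ)} (h : 1 ≤ genus S) : (0 : V → ℝ) ∉ S :=
  fun h0 => by simp [genus_zero_of_zero_mem h0] at h

lemma card_mem_gset {S : Set (V → ℝ)} (h0 : (0 : V → ℝ) ∉ S) :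
    Fintype.card V ∈ gset S := by
  classical
  set e := Fintype.equivFin V
  refine ⟨fun x i => (x : V → ℝ) (e.symm i), ?_, ?_, ?_⟩
  · exact continuous_pi fun i => (continuous_apply _).comp continuous_subtype_val
  · rintro ⟨x, hx⟩ hfx
    apply h0
    have : x = 0 := by
      funext v
      have := congrFun hfx (e v)
      simpa using this
    rwa [this] at hx
  · intro x hx hx'
    funext i
    simp

lemma gset_nonempty {S : Set (V → ℝ)} (h0 : (0 : V → ℝ) ∉ S) : (gset S).Nonempty :=
  ⟨_, card_mem_gset h0⟩

/-- Pullback of genus witnesses along an odd continuous map. -/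
lemma gset_subset_of_oddmap {S T : Set (V → ℝ)} (ψ : S → (V → ℝ))
    (hψc : Continuous ψ) (hψmem : ∀ x, ψ x ∈ T)
    (hψodd : ∀ (x : V → ℝ) (hx : x ∈ S) (hx' : -x ∈ S), ψ ⟨-x, hx'⟩ = - ψ ⟨x, hx⟩) :
    gset T ⊆ gset S := by
  rintro m ⟨f, hc, hnz, hodd⟩
  refine ⟨fun z => f ⟨ψ z, hψmem z⟩, hc.comp (hψc.subtype_mk _), fun z => hnz _, ?_⟩
  intro x hx hx'
  have h1 : ψ ⟨-x, hx'⟩ = - ψ ⟨x, hx⟩ := hψodd x hx hx'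
  have hm : -(ψ ⟨x, hx⟩) ∈ T := h1 ▸ hψmem ⟨-x, hx'⟩
  have h2 : (⟨ψ ⟨-x, hx'⟩, hψmem _⟩ : T) = ⟨- ψ ⟨x, hx⟩, hm⟩ := Subtype.ext h1
  show f ⟨ψ ⟨-x, hx'⟩, _⟩ = - f ⟨ψ ⟨x, hx⟩, _⟩
  rw [h2]
  exact hodd (ψ ⟨x, hx⟩) (hψmem _) hm

lemma genus_le_of_oddmap {S T : Set (V → ℝ)} (ψ : S → (V → ℝ))
    (hψc : Continuous ψ) (hψmem : ∀ x, ψ x ∈ T)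
    (hψodd : ∀ (x : V → ℝ) (hx : x ∈ S) (hx' : -x ∈ S), ψ ⟨-x, hx'⟩ = - ψ ⟨x, hx⟩)
    (h0 : (0 : V → ℝ) ∉ T) :
    genus S ≤ genus T := by
  rw [genus_eq, genus_eq]
  have hne : (gset T).Nonempty := gset_nonempty h0
  have hmem : sInf (gset T) ∈ gset T := Nat.sInf_mem hne
  exact Nat.sInf_le (gset_subset_of_oddmap ψ hψc hψmem hψodd hmem)

end GenusInfra


section Analytic
set_option linter.unusedSectionVars false
variable [Fintype V] [DecidableEq V] (G : SimpleGraph V) [DecidableRel G.Adj]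
  (μ : V → ℝ) (w : Sym2 V → ℝ)

/-- The numerator double sum of `Phi1`. -/
noncomputable def numS (y : V → ℝ) : ℝ :=
  ∑ u, ∑ v, if G.Adj u v then w s(u, v) * |y u - y v| else 0

lemma Phi1_def (y : V → ℝ) :
    Phi1 G μ w y = (numS G w y / 2) / (∑ v, μ v * |y v|) := rfl

lemma numS_nonneg (hw : ∀ e ∈ G.edgeSet, 0 < w e) (y : V → ℝ) : 0 ≤ numS G w y := by
  refine Finset.sum_nonneg fun u _ => Finset.sum_nonneg fun v _ => ?_
  by_cases h : G.Adj u v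
  · simp only [h, if_true]
    exact mul_nonneg (le_of_lt (hw _ ((SimpleGraph.mem_edgeSet G).mpr h))) (abs_nonneg _)
  · simp [h]

lemma Phi1_nonneg (hμ : ∀ v, 0 < μ v) (hw : ∀ e ∈ G.edgeSet, 0 < w e) (y : V → ℝ) :
    0 ≤ Phi1 G μ w y := by
  rw [Phi1_def]
  refine div_nonneg (div_nonneg (numS_nonneg G w hw y) (by norm_num)) ?_
  exact Finset.sum_nonneg fun v _ => mul_nonneg (le_of_lt (hμ v)) (abs_nonneg _)

/-- Linear combination of indicator vectors. -/
noncomputable def comb {k : ℕ} (A : Fin k → Finset V) (t : Fin k → ℝ) : V → ℝ :=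
  fun v => ∑ i, t i * indVec (A i) v

variable {k : ℕ} {A : Fin k → Finset V}

lemma comb_apply_mem (hA : IsSubpartition A) (t : Fin k → ℝ) {i : Fin k} {v : V}
    (hv : v ∈ A i) : comb A t v = t i := by
  rw [comb, Finset.sum_eq_single i]
  · simp [indVec, hv]
  · intro j _ hj
    have : v ∉ A j := fun hvj => (Finset.disjoint_left.mp (hA.2 j i hj) hvj) hv
    simp [indVec, this]
  · simp

lemma comb_apply_not_mem (t : Fin k → ℝ) {v : V} (hv : ∀ i, v ∉ A i) :
    comb A t v = 0 := by
  rw [comb]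
  exact Finset.sum_eq_zero fun i _ => by simp [indVec, hv i]

lemma abs_comb (hA : IsSubpartition A) (t : Fin k → ℝ) (v : V) :
    |comb A t v| = ∑ i, |t i| * indVec (A i) v := by
  by_cases hv : ∃ i, v ∈ A i
  · obtain ⟨i, hi⟩ := hv
    rw [comb_apply_mem hA t hi, Finset.sum_eq_single i]
    · simp [indVec, hi]
    · intro j _ hj
      have : v ∉ A j := fun hvj => (Finset.disjoint_left.mp (hA.2 j i hj) hvj) hi
      simp [indVec, this]
    · simp
  · push_neg at hv
    rw [comb_apply_not_mem t hv, abs_zero]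
    exact (Finset.sum_eq_zero fun i _ => by simp [indVec, hv i]).symm

lemma denom_comb (hA : IsSubpartition A) (hμ : ∀ v, 0 < μ v) (t : Fin k → ℝ) :
    ∑ v, μ v * |comb A t v| = ∑ i, |t i| * vol μ (A i) := by
  have : ∀ v, μ v * |comb A t v| = ∑ i, |t i| * (μ v * indVec (A i) v) := by
    intro v
    rw [abs_comb hA t v, Finset.mul_sum]
    exact Finset.sum_congr rfl fun i _ => by ring
  simp only [this]
  rw [Finset.sum_comm]
  refine Finset.sum_congr rfl fun i _ => ?_
  rw [← Finset.mul_sum, vol]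
  congr 1
  simp [indVec, mul_ite, Finset.sum_ite_mem]

lemma numS_indVec (B : Finset V) : numS G w (indVec B) = 2 * bdryW G w B := by
  have hu1 : ∀ u ∈ B, (∑ v, if G.Adj u v then w s(u, v) * |indVec B u - indVec B v| else 0)
      = ∑ v ∈ Bᶜ, (if G.Adj u v then w s(u, v) else 0) := by
    intro u hu
    rw [← Finset.sum_add_sum_compl B]
    have h1 : (∑ v ∈ B, if G.Adj u v then w s(u, v) * |indVec B u - indVec B v| else 0) = 0 :=
      Finset.sum_eq_zero fun v hv => by simp [indVec, hu, hv]
    rw [h1, zero_add]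
    refine Finset.sum_congr rfl fun v hv => ?_
    have hv' : v ∉ B := Finset.mem_compl.mp hv
    simp [indVec, hu, hv']
  have hu2 : ∀ u ∈ Bᶜ, (∑ v, if G.Adj u v then w s(u, v) * |indVec B u - indVec B v| else 0)
      = ∑ v ∈ B, (if G.Adj u v then w s(u, v) else 0) := by
    intro u hu
    have hu' : u ∉ B := Finset.mem_compl.mp hu
    rw [← Finset.sum_add_sum_compl B]
    have h2 : (∑ v ∈ Bᶜ, if G.Adj u v then w s(u, v) * |indVec B u - indVec B v| else 0) = 0 :=
      Finset.sum_eq_zero fun v hv => by simp [indVec, hu', Finset.mem_compl.mp hv]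
    rw [h2, add_zero]
    refine Finset.sum_congr rfl fun v hv => ?_
    simp [indVec, hu', hv]
  rw [numS, ← Finset.sum_add_sum_compl B, Finset.sum_congr rfl hu1, Finset.sum_congr rfl hu2]
  have h3 : (∑ u ∈ Bᶜ, ∑ v ∈ B, if G.Adj u v then w s(u, v) else 0)
      = ∑ v ∈ B, ∑ u ∈ Bᶜ, if G.Adj u v then w s(u, v) else 0 := Finset.sum_comm
  have h4 : (∑ v ∈ B, ∑ u ∈ Bᶜ, if G.Adj u v then w s(u, v) else 0) = bdryW G w B := by
    rw [bdryW]
    refine Finset.sum_congr rfl fun v _ => Finset.sum_congr rfl fun u _ => ?_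
    exact if_congr (G.adj_comm u v) (congrArg w Sym2.eq_swap) rfl
  have h5 : (∑ u ∈ B, ∑ v ∈ Bᶜ, if G.Adj u v then w s(u, v) else 0) = bdryW G w B := rfl
  rw [h3, h4, h5, two_mul]

lemma numS_comb_le (hA : IsSubpartition A) (hw : ∀ e ∈ G.edgeSet, 0 < w e) (t : Fin k → ℝ) :
    numS G w (comb A t) ≤ ∑ i, |t i| * (2 * bdryW G w (A i)) := by
  have key : ∀ u v, (if G.Adj u v then w s(u, v) * |comb A t u - comb A t v| else 0)
      ≤ ∑ i, |t i| * (if G.Adj u v then w s(u, v) * |indVec (A i) u - indVec (A i) v| else 0) := by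
    intro u v
    by_cases h : G.Adj u v
    · simp only [h, if_true]
      have hdiff : comb A t u - comb A t v = ∑ i, t i * (indVec (A i) u - indVec (A i) v) := by
        rw [comb, comb, ← Finset.sum_sub_distrib]
        exact Finset.sum_congr rfl fun i _ => by ring
      have habs : |comb A t u - comb A t v| ≤ ∑ i, |t i| * |indVec (A i) u - indVec (A i) v| := by
        rw [hdiff]
        refine le_trans (Finset.abs_sum_le_sum_abs _ _) ?_
        exact le_of_eq (Finset.sum_congr rfl fun i _ => abs_mul _ _)
      have hw0 : 0 ≤ w s(u, v) := le_of_lt (hw _ ((SimpleGraph.mem_edgeSet G).mpr h))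
      calc w s(u, v) * |comb A t u - comb A t v|
          ≤ w s(u, v) * ∑ i, |t i| * |indVec (A i) u - indVec (A i) v| :=
            mul_le_mul_of_nonneg_left habs hw0
        _ = ∑ i, |t i| * (w s(u, v) * |indVec (A i) u - indVec (A i) v|) := by
            rw [Finset.mul_sum]; exact Finset.sum_congr rfl fun i _ => by ring
    · simp [h]
  calc numS G w (comb A t)
      ≤ ∑ u, ∑ v, ∑ i, |t i| *
          (if G.Adj u v then w s(u, v) * |indVec (A i) u - indVec (A i) v| else 0) := by
        refine Finset.sum_le_sum fun u _ => Finset.sum_le_sum fun v _ => key u v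
    _ = ∑ u, ∑ i, ∑ v, |t i| *
          (if G.Adj u v then w s(u, v) * |indVec (A i) u - indVec (A i) v| else 0) :=
        Finset.sum_congr rfl fun u _ => Finset.sum_comm
    _ = ∑ i, ∑ u, ∑ v, |t i| *
          (if G.Adj u v then w s(u, v) * |indVec (A i) u - indVec (A i) v| else 0) :=
        Finset.sum_comm
    _ = ∑ i, |t i| * numS G w (indVec (A i)) := by
        refine Finset.sum_congr rfl fun i _ => ?_
        rw [numS, Finset.mul_sum]
        exact Finset.sum_congr rfl fun u _ => (Finset.mul_sum _ _ _).symm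
    _ = ∑ i, |t i| * (2 * bdryW G w (A i)) := by
        exact Finset.sum_congr rfl fun i _ => by rw [numS_indVec]

lemma Phi1_comb_le (hA : IsSubpartition A) (hμ : ∀ v, 0 < μ v)
    (hw : ∀ e ∈ G.edgeSet, 0 < w e) {r : ℝ} (hr0 : 0 ≤ r)
    (hr : ∀ i, phi G μ w (A i) ≤ r) (t : Fin k → ℝ) :
    Phi1 G μ w (comb A t) ≤ r := by
  rw [Phi1_def, denom_comb μ hA hμ t]
  set D := ∑ i, |t i| * vol μ (A i) with hD
  have hvolpos : ∀ i, 0 < vol μ (A i) := by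
    intro i
    obtain ⟨v, hv⟩ := hA.1 i
    exact Finset.sum_pos' (fun x _ => le_of_lt (hμ x)) ⟨v, hv, hμ v⟩
  have hD0 : 0 ≤ D :=
    Finset.sum_nonneg fun i _ => mul_nonneg (abs_nonneg _) (le_of_lt (hvolpos i))
  rcases eq_or_lt_of_le hD0 with hD0' | hDpos
  · rw [← hD0', div_zero]; exact hr0
  · rw [div_le_iff₀ hDpos]
    have hbdry : ∀ i, bdryW G w (A i) ≤ r * vol μ (A i) := by
      intro i
      have := hr i
      rw [phi, div_le_iff₀ (hvolpos i)] at this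
      exact this
    calc numS G w (comb A t) / 2 ≤ (∑ i, |t i| * (2 * bdryW G w (A i))) / 2 := by
          linarith [numS_comb_le G w hA hw t]
      _ ≤ (∑ i, |t i| * (2 * (r * vol μ (A i)))) / 2 := by
          have hsum : (∑ i, |t i| * (2 * bdryW G w (A i)))
              ≤ ∑ i, |t i| * (2 * (r * vol μ (A i))) :=
            Finset.sum_le_sum fun i _ =>
              mul_le_mul_of_nonneg_left (by linarith [hbdry i]) (abs_nonneg _)
          linarith
      _ = r * D := by
          rw [hD, Finset.mul_sum, Finset.sum_div]
          exact Finset.sum_congr rfl fun i _ => by ring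

lemma comb_neg (t : Fin k → ℝ) : comb A (-t) = - comb A t := by
  funext v
  simp only [comb, Pi.neg_apply, neg_mul]
  rw [← Finset.sum_neg_distrib]

lemma bdryW_nonneg (hw : ∀ e ∈ G.edgeSet, 0 < w e) (B : Finset V) : 0 ≤ bdryW G w B := by
  refine Finset.sum_nonneg fun u _ => Finset.sum_nonneg fun v _ => ?_
  by_cases h : G.Adj u v
  · simp only [h, if_true]
    exact le_of_lt (hw _ ((SimpleGraph.mem_edgeSet G).mpr h))
  · simp [h]

lemma phi_nonneg (hμ : ∀ v, 0 < μ v) (hw : ∀ e ∈ G.edgeSet, 0 < w e) (B : Finset V) :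
    0 ≤ phi G μ w B :=
  div_nonneg (bdryW_nonneg G w hw B)
    (Finset.sum_nonneg fun v _ => le_of_lt (hμ v))

end Analytic

theorem hk_ge_lambdak [Fintype V] [DecidableEq V] (G : SimpleGraph V) [DecidableRel G.Adj]
    (μ : V → ℝ) (w : Sym2 V → ℝ) (hμ : ∀ v, 0 < μ v) (hw : ∀ e ∈ G.edgeSet, 0 < w e)
    (k : ℕ) (hk : 1 ≤ k) (hkn : k ≤ Fintype.card V) :
    lambdak G μ w k ≤ hkConst G μ w k := by
  classical
  rw [lambdak, hkConst]
  set L : Set ℝ := {r | ∃ S : Set (V → ℝ), IsCompact S ∧ (∀ x ∈ S, -x ∈ S) ∧ k ≤ genus S ∧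
    r = sSup (Phi1 G μ w '' S)} with hLdef
  have hL0 : ∀ r ∈ L, (0 : ℝ) ≤ r := by
    rintro r ⟨S, _, _, _, rfl⟩
    exact Real.sSup_nonneg (by rintro _ ⟨y, _, rfl⟩; exact Phi1_nonneg G μ w hμ hw y)
  have hLbdd : BddBelow L := ⟨0, fun r hr => hL0 r hr⟩
  -- the hkConst set is nonempty
  have hHne : {r | ∃ A : Fin k → Finset V, IsSubpartition A ∧
      r = sSup {s | ∃ i, s = phi G μ w (A i)}}.Nonempty := by
    obtain ⟨emb⟩ : Nonempty (Fin k ↪ V) := by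
      apply Function.Embedding.nonempty_of_card_le
      simpa using hkn
    refine ⟨_, fun i => {emb i}, ⟨fun i => Finset.singleton_nonempty _, fun i j hij => ?_⟩, rfl⟩
    rw [Finset.disjoint_singleton]
    exact fun h => hij (emb.injective h)
  refine le_csInf hHne ?_
  rintro r ⟨A, hA, rfl⟩
  -- facts about the target value
  have hbddA : BddAbove {s | ∃ i, s = phi G μ w (A i)} := by
    have : {s | ∃ i, s = phi G μ w (A i)} = Set.range (fun i => phi G μ w (A i)) := by
      ext s; simp [Set.mem_range, eq_comm]
    rw [this]
    exact (Set.finite_range _).bddAbove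
  have hrle : ∀ i, phi G μ w (A i) ≤ sSup {s | ∃ i, s = phi G μ w (A i)} :=
    fun i => le_csSup hbddA ⟨i, rfl⟩
  have hr0 : (0 : ℝ) ≤ sSup {s | ∃ i, s = phi G μ w (A i)} :=
    le_trans (phi_nonneg G μ w hμ hw (A ⟨0, hk⟩)) (hrle ⟨0, hk⟩)
  rcases Set.eq_empty_or_nonempty L with hLe | hLne
  · rw [hLe, Real.sInf_empty]
    exact hr0
  obtain ⟨r₀, S₀, hS₀c, hS₀s, hS₀g, -⟩ := hLne
  -- S₀ avoids 0, and its genus is attained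
  have h0S₀ : (0 : V → ℝ) ∉ S₀ := zero_not_mem_of_genus_pos (le_trans hk hS₀g)
  have hgmem : genus S₀ ∈ gset S₀ := by
    rw [genus_eq]
    exact Nat.sInf_mem (gset_nonempty h0S₀)
  obtain ⟨f₀, hf₀c, hf₀nz, hf₀odd⟩ := hgmem
  have hgk : k ≤ genus S₀ := hS₀g
  -- index embeddings
  let idx1 : Fin k → Fin (genus S₀) := fun i => ⟨i.1, by have := i.2; omega⟩
  let idx2 : Fin (genus S₀ - k) → Fin (genus S₀) := fun j => ⟨k + j.1, by have := j.2; omega⟩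
  -- the subset where the last coordinates of f₀ vanish
  let Bsub : Set S₀ := {x | ∀ j, f₀ x (idx2 j) = 0}
  have hBsubclosed : IsClosed Bsub := by
    have : Bsub = ⋂ j, {x : S₀ | f₀ x (idx2 j) = 0} := by
      ext x; simp [Bsub, Set.mem_iInter]
    rw [this]
    exact isClosed_iInter fun j =>
      isClosed_eq ((continuous_apply (idx2 j)).comp hf₀c) continuous_const
  let Bset : Set (V → ℝ) := Subtype.val '' Bsub
  haveI : CompactSpace S₀ := isCompact_iff_compactSpace.mp hS₀c
  have hBc : IsCompact Bset := (hBsubclosed.isCompact).image continuous_subtype_val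
  have hBsetS₀ : Bset ⊆ S₀ := by rintro _ ⟨x, -, rfl⟩; exact x.2
  have h0B : (0 : V → ℝ) ∉ Bset := fun h => h0S₀ (hBsetS₀ h)
  have hBsym : ∀ y ∈ Bset, -y ∈ Bset := by
    rintro _ ⟨x, hx, rfl⟩
    refine ⟨⟨-x.1, hS₀s x.1 x.2⟩, fun j => ?_, rfl⟩
    have hodd := hf₀odd x.1 x.2 (hS₀s x.1 x.2)
    have hx' : (⟨x.1, x.2⟩ : S₀) = x := Subtype.ext rfl
    rw [hodd, hx', Pi.neg_apply, hx j, neg_zero]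
  let ι : Bset → S₀ := fun z => ⟨z.1, hBsetS₀ z.2⟩
  have hιc : Continuous ι := continuous_subtype_val.subtype_mk _
  have hι2 : ∀ (z : Bset) (j), f₀ (ι z) (idx2 j) = 0 := by
    intro z j
    obtain ⟨x, hx, hval⟩ := z.2
    have : ι z = x := Subtype.ext (by simp [ι, ← hval])
    rw [this]
    exact hx j
  -- claim : k ≤ genus Bset
  have hkB : k ≤ genus Bset := by
    by_contra hcon
    push_neg at hcon
    have hmBmem : genus Bset ∈ gset Bset := by
      rw [genus_eq]
      exact Nat.sInf_mem (gset_nonempty h0B)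
    obtain ⟨h, hhc, hhnz, hhodd⟩ := hmBmem
    -- Tietze extension of h
    obtain ⟨Hm, hHm⟩ := ContinuousMap.exists_restrict_eq (Y := Fin (genus Bset) → ℝ)
      hBc.isClosed (⟨h, hhc⟩ : C(Bset, Fin (genus Bset) → ℝ))
    have hHmeq : ∀ z : Bset, Hm z.1 = h z := by
      intro z
      have := ContinuousMap.congr_fun hHm z
      simpa using this
    -- oddification
    set Htil : (V → ℝ) → (Fin (genus Bset) → ℝ) := fun y => (2⁻¹ : ℝ) • (Hm y - Hm (-y)) with hHtildef
    have hHtilc : Continuous Htil := by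
      show Continuous (fun y => (2⁻¹ : ℝ) • (Hm y - Hm (-y)))
      exact (continuous_const (y := (2⁻¹ : ℝ))).smul
        (Hm.continuous.sub (Hm.continuous.comp continuous_neg))
    have hHtilodd : ∀ y, Htil (-y) = - Htil y := by
      intro y
      simp only [hHtildef, neg_neg]
      rw [← neg_sub, smul_neg]
    have hHtilB : ∀ z : Bset, Htil z.1 = h z := by
      intro z
      have hz' : -z.1 ∈ Bset := hBsym z.1 z.2
      have h1 : Hm z.1 = h z := hHmeq z
      have h2 : Hm (-z.1) = h ⟨-z.1, hz'⟩ := hHmeq ⟨-z.1, hz'⟩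
      have h3 : h ⟨-z.1, hz'⟩ = - h ⟨z.1, z.2⟩ := hhodd z.1 z.2 hz'
      have h4 : (⟨z.1, z.2⟩ : Bset) = z := Subtype.ext rfl
      rw [hHtildef]
      simp only [h1, h2, h3, h4, sub_neg_eq_add]
      rw [← two_smul ℝ, smul_smul]
      norm_num
    -- combined map on S₀ contradicting minimality of genus S₀
    have hcomb : (genus Bset) + (genus S₀ - k) ∈ gset S₀ := by
      refine ⟨fun x => fun idx => if hidx : idx.1 < (genus Bset) then Htil x.1 ⟨idx.1, hidx⟩
        else f₀ x (idx2 ⟨idx.1 - (genus Bset), by have := idx.2; omega⟩), ?_, ?_, ?_⟩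
      · refine continuous_pi fun idx => ?_
        by_cases hidx : idx.1 < (genus Bset)
        · simpa only [dif_pos hidx, Function.comp_def] using
            ((continuous_apply _).comp (hHtilc.comp continuous_subtype_val))
        · simpa only [dif_neg hidx, Function.comp_def] using ((continuous_apply _).comp hf₀c)
      · intro x hFx
        have hxBsub : x ∈ Bsub := by
          intro j
          have hlt : ¬ ((genus Bset) + j.1 < (genus Bset)) := by omega
          have := congrFun hFx ⟨(genus Bset) + j.1, by have := j.2; omega⟩
          simp only [Fin.val_mk, Pi.zero_apply] at this
          rw [dif_neg hlt] at this
          have hj : (⟨(genus Bset) + j.1 - (genus Bset), by have := j.2; omega⟩ :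
              Fin (genus S₀ - k)) = j :=
            Fin.ext (by simp only [Fin.val_mk]; omega)
          rwa [hj] at this
        set z : Bset := ⟨x.1, ⟨x, hxBsub, rfl⟩⟩ with hzdef
        refine hhnz z (funext fun i => ?_)
        have hlt : i.1 < (genus Bset) + (genus S₀ - k) := by have := i.2; omega
        have := congrFun hFx ⟨i.1, hlt⟩
        simp only [Fin.val_mk, Pi.zero_apply] at this
        rw [dif_pos i.2] at this
        have hi : (⟨i.1, i.2⟩ : Fin (genus Bset)) = i := Fin.ext rfl
        rw [hi] at this
        have hzx : Htil z.1 = Htil x.1 := rfl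
        rw [← hHtilB z, hzx, this, Pi.zero_apply]
      · intro x hx hx'
        funext idx
        by_cases hidx : idx.1 < (genus Bset)
        · simp only [dif_pos hidx, Pi.neg_apply]
          have := congrFun (hHtilodd x) ⟨idx.1, hidx⟩
          simpa using this
        · simp only [dif_neg hidx, Pi.neg_apply]
          have := congrFun (hf₀odd x hx hx') (idx2 ⟨idx.1 - (genus Bset), by have := idx.2; omega⟩)
          simpa using this
    have hle : genus S₀ ≤ (genus Bset) + (genus S₀ - k) := by
      rw [genus_eq]
      exact Nat.sInf_le hcomb
    omega
  -- the odd map into the span of indicators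
  let q : Bset → (Fin k → ℝ) := fun z => fun i => f₀ (ι z) (idx1 i)
  have hqc : Continuous q := continuous_pi fun i => (continuous_apply _).comp (hf₀c.comp hιc)
  have hqnz : ∀ z, q z ≠ 0 := by
    intro z hq0
    refine hf₀nz (ι z) (funext fun idx => ?_)
    by_cases hidx : idx.1 < k
    · have := congrFun hq0 ⟨idx.1, hidx⟩
      simp only [q, Pi.zero_apply] at this ⊢
      have hi : idx1 ⟨idx.1, hidx⟩ = idx := Fin.ext rfl
      rwa [hi] at this
    · have hj : idx2 ⟨idx.1 - k, by have := idx.2; omega⟩ = idx := Fin.ext (by show k + (idx.1 - k) = idx.1; omega)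
      have := hι2 z ⟨idx.1 - k, by have := idx.2; omega⟩
      rwa [hj] at this
  have hqodd : ∀ (y : V → ℝ) (hy : y ∈ Bset) (hy' : -y ∈ Bset),
      q ⟨-y, hy'⟩ = - q ⟨y, hy⟩ := by
    intro y hy hy'
    funext i
    have hodd := hf₀odd y (hBsetS₀ hy) (hBsetS₀ hy')
    simp only [q, Pi.neg_apply]
    show f₀ ⟨-y, hBsetS₀ hy'⟩ (idx1 i) = - f₀ ⟨y, hBsetS₀ hy⟩ (idx1 i)
    rw [hodd, Pi.neg_apply]
  let ψ : Bset → (V → ℝ) := fun z => comb A (q z)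
  have hψc : Continuous ψ := by
    refine continuous_pi fun v => ?_
    exact continuous_finset_sum _ fun i _ => ((continuous_apply i).comp hqc).mul continuous_const
  set Tset : Set (V → ℝ) := Set.range ψ with hTdef
  haveI : CompactSpace Bset := isCompact_iff_compactSpace.mp hBc
  have hTc : IsCompact Tset := isCompact_range hψc
  have hψodd : ∀ (y : V → ℝ) (hy : y ∈ Bset) (hy' : -y ∈ Bset),
      ψ ⟨-y, hy'⟩ = - ψ ⟨y, hy⟩ := by
    intro y hy hy'
    show comb A (q ⟨-y, hy'⟩) = - comb A (q ⟨y, hy⟩)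
    rw [hqodd y hy hy', comb_neg]
  have hTsym : ∀ y ∈ Tset, -y ∈ Tset := by
    rintro _ ⟨z, rfl⟩
    refine ⟨⟨-z.1, hBsym z.1 z.2⟩, ?_⟩
    have h4 : (⟨z.1, z.2⟩ : Bset) = z := Subtype.ext rfl
    rw [hψodd z.1 z.2 (hBsym z.1 z.2), h4]
  have h0T : (0 : V → ℝ) ∉ Tset := by
    rintro ⟨z, hz⟩
    refine hqnz z (funext fun i => ?_)
    obtain ⟨v, hv⟩ := hA.1 i
    have := congrFun hz v
    rw [show ψ z v = comb A (q z) v from rfl, comb_apply_mem hA (q z) hv] at this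
    simpa using this
  have hgenusT : k ≤ genus Tset :=
    le_trans hkB (genus_le_of_oddmap ψ hψc (fun z => ⟨z, rfl⟩) hψodd h0T)
  -- conclude
  have hmem : sSup (Phi1 G μ w '' Tset) ∈ L := ⟨Tset, hTc, hTsym, hgenusT, rfl⟩
  refine le_trans (csInf_le hLbdd hmem) ?_
  refine Real.sSup_le ?_ hr0
  rintro _ ⟨_, ⟨z, rfl⟩, rfl⟩
  exact Phi1_comb_le G μ w hA hμ hw hr0 hrle (q z)
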